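/- arXiv:1412.5745 — 2 statements merged into one kernel-verified Lean document; each statement's English description precedes it below -/
import Mathlib

section
/- In the Mycielskian μ(G) of a connected graph G, for any two original vertices v_i, v_j with d_G(v_i, v_j) ≤ 3, the distance in μ(G) satisfies d_μ(v_i, v_j) = d_G(v_i, v_j); and if d_G(v_i, v_j) ≥ 4 then d_μ(v_i, v_j) = 4. -/
open SimpleGraph

/-- The Mycielskian of a graph `G`. Vertex `none` is the apex `x`,
`some (Sum.inl v)` is the original vertex `v`, and `some (Sum.inr v)` is the copy `x_v`. -/
def mycielskian {V : Type*} (G : SimpleGraph V) : SimpleGraph (Option (V ⊕ V)) where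
  Adj a b :=
    match a, b with
    | some (Sum.inl v), some (Sum.inl w) => G.Adj v w
    | some (Sum.inl v), some (Sum.inr w) => G.Adj v w
    | some (Sum.inr v), some (Sum.inl w) => G.Adj v w
    | some (Sum.inr _), none => True
    | none, some (Sum.inr _) => True
    | _, _ => False
  symm := by
    constructor
    rintro (_ | (a | a)) (_ | (b | b)) h <;> simp_all <;> exact G.symm.symm _ _ h
  loopless := by
    constructor
    rintro (_ | (a | a)) h <;> simp_all

instance {V : Type*} (G : SimpleGraph V) [DecidableRel G.Adj] :
    DecidableRel (mycielskian G).Adj := fun a b =>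
  match a, b with
  | some (Sum.inl v), some (Sum.inl w) => inferInstanceAs (Decidable (G.Adj v w))
  | some (Sum.inl v), some (Sum.inr w) => inferInstanceAs (Decidable (G.Adj v w))
  | some (Sum.inr v), some (Sum.inl w) => inferInstanceAs (Decidable (G.Adj v w))
  | some (Sum.inr _), none => inferInstanceAs (Decidable True)
  | none, some (Sum.inr _) => inferInstanceAs (Decidable True)
  | none, none => inferInstanceAs (Decidable False)
  | none, some (Sum.inl _) => inferInstanceAs (Decidable False)
  | some (Sum.inl _), none => inferInstanceAs (Decidable False)
  | some (Sum.inr _), some (Sum.inr _) => inferInstanceAs (Decidable False)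


section Aux
variable {V : Type*} {G : SimpleGraph V}

lemma myc_adj_proj {a b : V ⊕ V}
    (h : (mycielskian G).Adj (some a) (some b)) :
    G.Adj (Sum.elim id id a) (Sum.elim id id b) := by
  rcases a with a | a <;> rcases b with b | b <;> simpa [mycielskian] using h

lemma myc_proj_walk :
    ∀ {x y : Option (V ⊕ V)} (w : (mycielskian G).Walk x y), none ∉ w.support →
      ∀ a b, x = some a → y = some b →
        ∃ w' : G.Walk (Sum.elim id id a) (Sum.elim id id b), w'.length = w.length := by
  intro x y w
  induction w with
  | nil =>
    intro _ a b hx hy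
    subst hx
    injection hy with h
    subst h
    exact ⟨SimpleGraph.Walk.nil, rfl⟩
  | @cons u c y h w ih =>
    intro hs a b hx hy
    have hc : c ∈ (SimpleGraph.Walk.cons h w).support := by
      simp [SimpleGraph.Walk.support_cons, SimpleGraph.Walk.start_mem_support]
    have hcn : c ≠ none := fun hcn => hs (hcn ▸ hc)
    obtain ⟨c', rfl⟩ := Option.ne_none_iff_exists'.mp hcn
    have hns : none ∉ w.support := fun hn => hs (by simp [SimpleGraph.Walk.support_cons, hn])
    obtain ⟨w', hw'⟩ := ih hns c' b rfl hy
    subst hx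
    exact ⟨SimpleGraph.Walk.cons (myc_adj_proj h) w', by simp [hw']⟩

lemma myc_two_le_length_to_none :
    ∀ {v : V} (w : (mycielskian G).Walk (some (Sum.inl v)) none), 2 ≤ w.length := by
  intro v w
  cases w with
  | cons h w' =>
    cases w' with
    | nil => exact absurd h (by rintro (_ | _ | _ | _) <;> trivial)
    | cons h2 w'' => simp

lemma myc_lower {i j : V} (w : (mycielskian G).Walk (some (Sum.inl i)) (some (Sum.inl j))) :
    min (G.dist i j) 4 ≤ w.length := by
  haveI : DecidableEq (Option (V ⊕ V)) := Classical.decEq _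
  rcases Classical.em ((none : Option (V ⊕ V)) ∈ w.support) with hn | hn
  · have hsplit := w.take_spec hn
    have hlen : (w.takeUntil none hn).length + (w.dropUntil none hn).length = w.length := by
      rw [← SimpleGraph.Walk.length_append, hsplit]
    have h1 := myc_two_le_length_to_none (w.takeUntil none hn)
    have h2 := myc_two_le_length_to_none (w.dropUntil none hn).reverse
    rw [SimpleGraph.Walk.length_reverse] at h2
    omega
  · obtain ⟨w', hw'⟩ := myc_proj_walk w hn _ _ rfl rfl
    have := G.dist_le w'
    simp only [Sum.elim_inl, id] at this
    replace this : G.dist i j ≤ w'.length := this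
    omega

def myc_inl_hom : G →g mycielskian G where
  toFun v := some (Sum.inl v)
  map_rel' h := h

lemma myc_dist_le_dist (i j : V) (hr : G.Reachable i j) :
    (mycielskian G).dist (some (Sum.inl i)) (some (Sum.inl j)) ≤ G.dist i j := by
  obtain ⟨p, hp⟩ := hr.exists_walk_length_eq_dist
  have := SimpleGraph.dist_le (p.map (myc_inl_hom (G := G)))
  rwa [SimpleGraph.Walk.length_map, hp] at this

end Aux

theorem stmt3 {V : Type*} (G : SimpleGraph V) (hG : G.Connected) :
    ∀ i j : V,
      (G.dist i j ≤ 3 →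
        (mycielskian G).dist (some (Sum.inl i)) (some (Sum.inl j)) = G.dist i j) ∧
      (4 ≤ G.dist i j →
        (mycielskian G).dist (some (Sum.inl i)) (some (Sum.inl j)) = 4) := by
  intro i j
  have hr : G.Reachable i j := hG i j
  have hrm : (mycielskian G).Reachable (some (Sum.inl i)) (some (Sum.inl j)) := by
    obtain ⟨p, _⟩ := hr.exists_walk_length_eq_dist
    exact ⟨p.map (myc_inl_hom (G := G))⟩
  obtain ⟨q, hq⟩ := hrm.exists_walk_length_eq_dist
  have hlow := myc_lower q
  rw [hq] at hlow
  constructor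
  · intro h3
    have h1 := myc_dist_le_dist i j hr
    omega
  · intro h4
    -- upper bound 4 via explicit walk
    obtain ⟨p, hp⟩ := hr.exists_walk_length_eq_dist
    have hplen : 4 ≤ p.length := hp ▸ h4
    obtain ⟨a, ha, p'⟩ : ∃ a, G.Adj i a ∧ Nonempty (G.Walk a j) := by
      cases p with
      | nil => simp at hplen
      | cons h w => exact ⟨_, h, ⟨w⟩⟩
    obtain ⟨b, hb⟩ : ∃ b, G.Adj j b := by
      have hplen' : 4 ≤ p.reverse.length := by simpa using hplen
      cases hpr : p.reverse with
      | nil => rw [hpr] at hplen'; simp at hplen'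
      | cons h w => exact ⟨_, h⟩
    have hle := SimpleGraph.dist_le (G := mycielskian G)
      (SimpleGraph.Walk.cons (show (mycielskian G).Adj (some (Sum.inl i)) (some (Sum.inr a)) from ha)
        (SimpleGraph.Walk.cons (show (mycielskian G).Adj (some (Sum.inr a)) none from trivial)
          (SimpleGraph.Walk.cons (show (mycielskian G).Adj none (some (Sum.inr b)) from trivial)
            (SimpleGraph.Walk.cons
              (show (mycielskian G).Adj (some (Sum.inr b)) (some (Sum.inl j)) from hb.symm)
              SimpleGraph.Walk.nil))))
    simp only [SimpleGraph.Walk.length_cons, SimpleGraph.Walk.length_nil] at hle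
    omega
end

section
/- Let G be a graph on n vertices with m edges whose minimum degree δ is at least 1, and let μ be its Mycielskian. Then the contribution of the edges between copy vertices and original vertices to the Randić index satisfies Σ_{x_i v_j ∈ E(μ)} 1/√(deg_μ(x_i)·deg_μ(v_j)) ≤ √2·m / √(δ² + δ), with equality if G is regular. -/
open SimpleGraph

lemma sum_ite_adj_const {V : Type*} [Fintype V] [DecidableEq V] (G : SimpleGraph V)
    [DecidableRel G.Adj] (c : ℝ) :
    (∑ i : V, ∑ j : V, if G.Adj i j then c else 0)
      = 2 * G.edgeFinset.card * c := by
  have h1 : ∀ i : V, (∑ j : V, if G.Adj i j then c else 0) = (G.degree i : ℝ) * c := by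
    intro i
    rw [Finset.sum_ite, Finset.sum_const, Finset.sum_const, smul_zero, add_zero]
    rw [SimpleGraph.degree, SimpleGraph.neighborFinset_eq_filter]
    simp [mul_comm]
  simp only [h1, ← Finset.sum_mul, ← Nat.cast_sum]
  rw [SimpleGraph.sum_degrees_eq_twice_card_edges]
  push_cast; ring

theorem stmt9 {V : Type*} [Fintype V] [DecidableEq V] (G : SimpleGraph V) [DecidableRel G.Adj]
    (hδ : 1 ≤ G.minDegree) :
    (∑ i : V, ∑ j : V, if G.Adj i j then
        1 / Real.sqrt ((1 + (G.degree i : ℝ)) * (2 * G.degree j)) else 0)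
      ≤ Real.sqrt 2 * G.edgeFinset.card /
          Real.sqrt ((G.minDegree : ℝ) ^ 2 + G.minDegree) ∧
    (∀ k : ℕ, G.IsRegularOfDegree k →
      (∑ i : V, ∑ j : V, if G.Adj i j then
          1 / Real.sqrt ((1 + (G.degree i : ℝ)) * (2 * G.degree j)) else 0)
        = Real.sqrt 2 * G.edgeFinset.card /
            Real.sqrt ((G.minDegree : ℝ) ^ 2 + G.minDegree)) := by
  set δ : ℝ := (G.minDegree : ℝ) with hδdef
  have hδ1 : (1 : ℝ) ≤ δ := by rw [hδdef]; exact_mod_cast hδ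
  have ha : (0 : ℝ) < δ ^ 2 + δ := by nlinarith
  have hsa : (0 : ℝ) < Real.sqrt (δ ^ 2 + δ) := Real.sqrt_pos.mpr ha
  have hkey : Real.sqrt 2 * (G.edgeFinset.card : ℝ) / Real.sqrt (δ ^ 2 + δ)
      = 2 * G.edgeFinset.card * (1 / Real.sqrt (2 * (δ ^ 2 + δ))) := by
    rw [Real.sqrt_mul (by norm_num)]
    have h2 : Real.sqrt 2 * Real.sqrt 2 = 2 := Real.mul_self_sqrt (by norm_num)
    have hs2 : (0 : ℝ) < Real.sqrt 2 := by positivity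
    generalize (G.edgeFinset.card : ℝ) = c
    field_simp
    linear_combination c * h2
  constructor
  · rw [hkey, ← sum_ite_adj_const G]
    apply Finset.sum_le_sum
    intro i _
    apply Finset.sum_le_sum
    intro j _
    by_cases h : G.Adj i j
    · simp only [h, if_true]
      apply one_div_le_one_div_of_le
      · apply Real.sqrt_pos.mpr; nlinarith
      · apply Real.sqrt_le_sqrt
        have hdi : δ ≤ (G.degree i : ℝ) := by
          rw [hδdef]; exact_mod_cast G.minDegree_le_degree i
        have hdj : δ ≤ (G.degree j : ℝ) := by
          rw [hδdef]; exact_mod_cast G.minDegree_le_degree j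
        nlinarith
    · simp [h]
  · intro k hreg
    have hV : Nonempty V := by
      by_contra h
      rw [not_nonempty_iff] at h
      have : G.minDegree = 0 := by
        simp [SimpleGraph.minDegree, Finset.univ_eq_empty]
      omega
    have hmin : G.minDegree = k := by
      have h1 := G.minDegree_le_degree (Classical.arbitrary V)
      rw [hreg (Classical.arbitrary V)] at h1
      have h2 := G.le_minDegree_of_forall_le_degree k (fun v => (hreg v).ge)
      omega
    have hδk : δ = (k : ℝ) := by rw [hδdef, hmin]
    rw [hkey, ← sum_ite_adj_const G (1 / Real.sqrt (2 * (δ ^ 2 + δ)))]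
    apply Finset.sum_congr rfl
    intro i _
    apply Finset.sum_congr rfl
    intro j _
    by_cases h : G.Adj i j
    · simp only [h, if_true, hreg i, hreg j, hδk]
      ring_nf
    · simp [h]
end
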